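/- Let λ_i, λ_j > 0 with λ_j > λ_i, and define on basis vectors S(e_ℓ^{(λ_j)}) = ((ℓ+k)!/ℓ!) √(a_{ℓ+k}(λ_i)/a_ℓ(λ_j)) e_{ℓ+k}^{(λ_i)} where k = j - i - 1 ≥ 0. Then the sequence of norms ((ℓ+k)!/ℓ!) √(a_{ℓ+k}(λ_i)/a_ℓ(λ_j)) is bounded if and only if λ_j - λ_i ≥ 2(j-i) - 2. -/

import Mathlib

/-- The Taylor coefficient `a_n(λ) = (λ)_n / n!` of `(1 - x)^{-λ}`. -/
noncomputable def bergmanCoeff (lam : ℝ) (n : ℕ) : ℝ :=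
  (ascPochhammer ℝ n).eval lam / n.factorial


noncomputable def poch (x : ℝ) (n : ℕ) : ℝ := ∏ m ∈ Finset.range n, (x + m)

lemma poch_ascPochhammer (x : ℝ) (n : ℕ) : (ascPochhammer ℝ n).eval x = poch x n := by
  induction n with
  | zero => simp [poch]
  | succ n ih =>
      rw [ascPochhammer_succ_eval, ih, poch, poch, Finset.prod_range_succ]

lemma poch_pos {x : ℝ} (hx : 0 < x) (n : ℕ) : 0 < poch x n :=
  Finset.prod_pos fun m _ => by positivity

lemma poch_add (x : ℝ) (m n : ℕ) :
    poch x (m + n) = poch x m * poch (x + m) n := by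
  rw [poch, poch, poch, Finset.prod_range_add]
  congr 1
  refine Finset.prod_congr rfl fun t _ => ?_
  push_cast; ring

lemma poch_telescope (x : ℝ) (m n : ℕ) :
    poch x m * poch (x + m) n = poch x n * poch (x + n) m := by
  rw [← poch_add, ← poch_add, Nat.add_comm]

lemma one_add_sum_le_prod (s : Finset ℕ) (f : ℕ → ℝ) (hf : ∀ i ∈ s, 0 ≤ f i) :
    1 + ∑ i ∈ s, f i ≤ ∏ i ∈ s, (1 + f i) := by
  classical
  induction s using Finset.induction with
  | empty => simp
  | @insert a s' hx ih =>
      rw [Finset.sum_insert hx, Finset.prod_insert hx]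
      have h1 : 0 ≤ f a := hf a (Finset.mem_insert_self a s')
      have h2 : 1 + ∑ i ∈ s', f i ≤ ∏ i ∈ s', (1 + f i) :=
        ih fun i hi => hf i (Finset.mem_insert_of_mem hi)
      have h3 : 0 ≤ ∑ i ∈ s', f i := Finset.sum_nonneg fun i hi => hf i (Finset.mem_insert_of_mem hi)
      nlinarith


noncomputable def shiftSq (a b : ℝ) (k ℓ : ℕ) : ℝ :=
  (∏ t ∈ Finset.range k, (((ℓ : ℝ) + 1 + t) * (a + ℓ + t))) * (poch a ℓ / poch b ℓ)

lemma factorial_ratio (ℓ k : ℕ) :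
    (((ℓ + k).factorial : ℝ)) = ℓ.factorial * ∏ t ∈ Finset.range k, ((ℓ : ℝ) + 1 + t) := by
  induction k with
  | zero => simp
  | succ k ih =>
      rw [show ℓ + (k + 1) = (ℓ + k) + 1 from rfl, Nat.factorial_succ, Finset.prod_range_succ]
      push_cast [ih]
      ring

lemma weight_eq_sqrt (a b : ℝ) (ha : 0 < a) (hb : 0 < b) (k ℓ : ℕ) :
    (((ℓ + k).factorial : ℝ) / (ℓ.factorial : ℝ)) *
      Real.sqrt (bergmanCoeff a (ℓ + k) / bergmanCoeff b ℓ) =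
    Real.sqrt (shiftSq a b k ℓ) := by
  set F : ℝ := ∏ t ∈ Finset.range k, ((ℓ : ℝ) + 1 + t) with hF
  have hFpos : 0 < F := Finset.prod_pos fun t _ => by positivity
  have hfac : (((ℓ + k).factorial : ℝ) / (ℓ.factorial : ℝ)) = F := by
    rw [factorial_ratio]
    field_simp
    exact hF.symm
  rw [hfac, ← Real.sqrt_sq hFpos.le, ← Real.sqrt_mul (by positivity)]
  congr 1
  have hbℓ : (0:ℝ) < poch b ℓ := poch_pos hb ℓ
  have hfℓ : (0:ℝ) < (ℓ.factorial : ℝ) := by positivity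
  have hfk : (0:ℝ) < ((ℓ+k).factorial : ℝ) := by positivity
  unfold bergmanCoeff shiftSq
  rw [poch_ascPochhammer, poch_ascPochhammer, poch_add, Finset.prod_mul_distrib, ← hF]
  have hpk : poch (a + ℓ) k = ∏ t ∈ Finset.range k, (a + ℓ + t) := by rfl
  rw [hpk, factorial_ratio ℓ k, ← hF]
  field_simp

lemma shiftSq_bounded (a b : ℝ) (ha : 0 < a) (k : ℕ) (hb : a + (k + k : ℕ) ≤ b) (ℓ : ℕ) :
    shiftSq a b k ℓ ≤ (1 + 1/a) ^ k * poch a (k + k) := by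
  have haℓ : (0:ℝ) < poch a ℓ := poch_pos ha ℓ
  have hb0 : 0 < b := lt_of_lt_of_le (by positivity) hb
  have hbℓ : (0:ℝ) < poch b ℓ := poch_pos hb0 ℓ
  have haℓn : (0:ℝ) < poch (a + ℓ) (k + k) := poch_pos (by positivity) _
  have hanℓ : (0:ℝ) < poch (a + (k+k : ℕ)) ℓ := poch_pos (by positivity) _
  -- step 1 : poch (a + (k+k)) ℓ ≤ poch b ℓ
  have h1 : poch (a + (k+k : ℕ)) ℓ ≤ poch b ℓ := by
    apply Finset.prod_le_prod
    · intro m _; positivity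
    · intro m _
      have : (0:ℝ) ≤ (m:ℝ) := by positivity
      linarith
  -- step 2 : P ≤ poch a (k+k) / poch (a+ℓ) (k+k)
  have htel : poch a ℓ * poch (a + ℓ) (k+k) = poch a (k+k) * poch (a + (k+k : ℕ)) ℓ := by
    have := poch_telescope a ℓ (k+k)
    push_cast at this ⊢
    linarith [this]
  have h2 : poch a ℓ / poch b ℓ ≤ poch a (k+k) / poch (a + ℓ) (k+k) := by
    rw [div_le_div_iff₀ hbℓ haℓn]
    calc poch a ℓ * poch (a + ℓ) (k+k) = poch a (k+k) * poch (a + (k+k:ℕ)) ℓ := htel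
    _ ≤ poch a (k+k) * poch b ℓ := by
        apply mul_le_mul_of_nonneg_left h1 (poch_pos ha _).le
  -- step 3 : Q ≤ (1+1/a)^k * poch (a+ℓ) (k+k)
  have hsplit : poch (a + ℓ) (k + k) = (∏ t ∈ Finset.range k, (a + ℓ + t)) *
      ∏ t ∈ Finset.range k, (a + ℓ + k + t) := by
    rw [poch_add]
    rfl
  have h3 : (∏ t ∈ Finset.range k, (((ℓ:ℝ) + 1 + t) * (a + ℓ + t)))
      ≤ (1 + 1/a) ^ k * poch (a + ℓ) (k + k) := by
    rw [hsplit, Finset.prod_mul_distrib]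
    have hfs : (∏ t ∈ Finset.range k, ((ℓ:ℝ) + 1 + t))
        ≤ ∏ t ∈ Finset.range k, ((1 + 1/a) * (a + ℓ + k + t)) := by
      apply Finset.prod_le_prod
      · intro t _; positivity
      · intro t _
        have h1a : a * (1/a) = 1 := by field_simp
        have ht : (0:ℝ) ≤ (t:ℝ) := by positivity
        have hk : (0:ℝ) ≤ (k:ℝ) := by positivity
        have hl : (0:ℝ) ≤ (ℓ:ℝ) := by positivity
        have hd : (1:ℝ) ≤ (a + ℓ + k + t) * (1/a) := by
          rw [mul_one_div, le_div_iff₀ ha]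
          nlinarith
        nlinarith
    rw [Finset.prod_mul_distrib, Finset.prod_const, Finset.card_range] at hfs
    calc (∏ t ∈ Finset.range k, ((ℓ:ℝ) + 1 + t)) * ∏ t ∈ Finset.range k, (a + ℓ + t)
        ≤ ((1 + 1/a) ^ k * ∏ t ∈ Finset.range k, (a + ℓ + (k:ℝ) + t)) *
          ∏ t ∈ Finset.range k, (a + ℓ + t) := by
          apply mul_le_mul_of_nonneg_right hfs
          exact Finset.prod_nonneg fun t _ => by positivity
    _ = (1 + 1/a) ^ k * ((∏ t ∈ Finset.range k, (a + ℓ + t)) *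
          ∏ t ∈ Finset.range k, (a + ℓ + (k:ℝ) + t)) := by ring
  -- combine
  unfold shiftSq
  have hQ0 : (0:ℝ) ≤ ∏ t ∈ Finset.range k, (((ℓ:ℝ) + 1 + t) * (a + ℓ + t)) :=
    Finset.prod_nonneg fun t _ => by positivity
  calc (∏ t ∈ Finset.range k, (((ℓ:ℝ) + 1 + t) * (a + ℓ + t))) * (poch a ℓ / poch b ℓ)
      ≤ ((1 + 1/a) ^ k * poch (a + ℓ) (k + k)) * (poch a (k+k) / poch (a + ℓ) (k+k)) := by
        apply mul_le_mul h3 h2 (by positivity) (by positivity)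
  _ = (1 + 1/a) ^ k * poch a (k + k) := by field_simp

set_option maxHeartbeats 1600000 in
lemma shiftSq_lower (a b : ℝ) (ha : 0 < a) (hb0 : 0 < b) (k : ℕ)
    (hε : b < a + (k + k : ℕ)) (ℓ : ℕ) :
    (1/((a+1)*(1+k/a)))^k * poch a (k+k) *
      (1 + ((a + (k+k:ℕ) - b)/(b+1)) * ∑ m ∈ Finset.range ℓ, (1/(m+1) : ℝ))
      ≤ shiftSq a b k ℓ := by
  set n := k + k with hn
  set ε : ℝ := a + (n:ℕ) - b with hεdef
  have hε0 : 0 < ε := by simp only [hεdef]; linarith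
  have hD : (0:ℝ) < (a+1)*(1+k/a) := by positivity
  have haℓ : (0:ℝ) < poch a ℓ := poch_pos ha ℓ
  have hbℓ : (0:ℝ) < poch b ℓ := poch_pos hb0 ℓ
  have haℓn : (0:ℝ) < poch (a + ℓ) n := poch_pos (by positivity) _
  have hanℓ : (0:ℝ) < poch (a + (n:ℕ)) ℓ := poch_pos (by positivity) _
  have han : (0:ℝ) < poch a n := poch_pos ha n
  have hsplit : poch (a + ℓ) n = (∏ t ∈ Finset.range k, (a + ℓ + t)) *
      ∏ t ∈ Finset.range k, (a + ℓ + k + t) := by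
    rw [hn, poch_add]; rfl
  -- Q lower bound
  have hQ : (1/((a+1)*(1+k/a)))^k * poch (a + ℓ) n
      ≤ ∏ t ∈ Finset.range k, (((ℓ:ℝ) + 1 + t) * (a + ℓ + t)) := by
    rw [hsplit]
    have : (1/((a+1)*(1+k/a)))^k * ((∏ t ∈ Finset.range k, (a + ℓ + t)) *
        ∏ t ∈ Finset.range k, (a + ℓ + k + t))
        = ∏ t ∈ Finset.range k, ((1/((a+1)*(1+k/a))) * ((a + ℓ + t) * (a + ℓ + k + t))) := by
      rw [Finset.prod_mul_distrib, Finset.prod_const, Finset.card_range,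
        ← Finset.prod_mul_distrib]
    rw [this]
    apply Finset.prod_le_prod
    · intro t _; positivity
    · intro t _
      have ht : (0:ℝ) ≤ (t:ℝ) := by positivity
      have hkk : (0:ℝ) ≤ (k:ℝ) := by positivity
      have hl : (0:ℝ) ≤ (ℓ:ℝ) := by positivity
      have hka : a * (k/a) = k := by field_simp
      have hc : (0:ℝ) ≤ (k:ℝ)/a := by positivity
      have hkey : a + ℓ + k + t ≤ ((a+1)*(1+k/a)) * (((ℓ:ℝ) + 1 + t)) := by
        nlinarith [mul_nonneg hkk hl, mul_nonneg hkk ht, mul_nonneg ha.le hl,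
          mul_nonneg ha.le ht, mul_nonneg hc (by linarith : (0:ℝ) ≤ (ℓ:ℝ) + 1 + t)]
      rw [one_div, ← div_eq_inv_mul, div_le_iff₀ hD]
      nlinarith [mul_pos (show (0:ℝ) < a + ℓ + t by positivity) hD]
  -- R lower bound
  have hR : 1 + (ε/(b+1)) * ∑ m ∈ Finset.range ℓ, (1/(m+1) : ℝ)
      ≤ poch (a + (n:ℕ)) ℓ / poch b ℓ := by
    have hprod : poch (a + (n:ℕ)) ℓ / poch b ℓ
        = ∏ m ∈ Finset.range ℓ, ((a + (n:ℕ) + m) / (b + m)) := by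
      rw [poch, poch, ← Finset.prod_div_distrib]
    rw [hprod, Finset.mul_sum]
    calc 1 + ∑ m ∈ Finset.range ℓ, (ε/(b+1)) * (1/(m+1) : ℝ)
        ≤ ∏ m ∈ Finset.range ℓ, (1 + (ε/(b+1)) * (1/(m+1) : ℝ)) := by
          apply one_add_sum_le_prod
          intro m _; positivity
    _ ≤ ∏ m ∈ Finset.range ℓ, ((a + (n:ℕ) + m) / (b + m)) := by
          apply Finset.prod_le_prod
          · intro m _; positivity
          · intro m _
            have hm : (0:ℝ) ≤ (m:ℝ) := by positivity
            have hbm : (0:ℝ) < b + m := by positivity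
            have hx : (ε/(b+1)) * (1/(m+1)) ≤ ε/(b+m) := by
              rw [div_mul_div_comm, mul_one]
              apply div_le_div_of_nonneg_left hε0.le hbm
              nlinarith
            have heq : (a + (n:ℕ) + m) / (b + m) = 1 + ε/(b+m) := by
              field_simp [hεdef]
              ring
            rw [heq]
            linarith
  -- P decomposition
  have htel : poch a ℓ * poch (a + ℓ) n = poch a n * poch (a + (n:ℕ)) ℓ := by
    have := poch_telescope a ℓ n
    push_cast at this ⊢
    linarith [this]
  have hPdecomp : poch a ℓ / poch b ℓ
      = (poch a n / poch (a + ℓ) n) * (poch (a + (n:ℕ)) ℓ / poch b ℓ) := by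
    rw [div_mul_div_comm, div_eq_div_iff hbℓ.ne' (by positivity)]
    nlinarith [htel]
  -- combine
  unfold shiftSq
  rw [hPdecomp]
  have hH : (0:ℝ) ≤ (ε/(b+1)) * ∑ m ∈ Finset.range ℓ, (1/(m+1) : ℝ) := by
    apply mul_nonneg (by positivity)
    exact Finset.sum_nonneg fun m _ => by positivity
  calc (1/((a+1)*(1+k/a)))^k * poch a n *
        (1 + (ε/(b+1)) * ∑ m ∈ Finset.range ℓ, (1/(m+1) : ℝ))
      = ((1/((a+1)*(1+k/a)))^k * poch (a+ℓ) n) * ((poch a n / poch (a + ℓ) n) *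
        (1 + (ε/(b+1)) * ∑ m ∈ Finset.range ℓ, (1/(m+1) : ℝ))) := by
        have hcancel : poch (a + ℓ) n * (poch a n / poch (a + ℓ) n) = poch a n := by
          field_simp
        linear_combination (-((1/((a+1)*(1+k/a)))^k *
          (1 + (ε/(b+1)) * ∑ m ∈ Finset.range ℓ, (1/(m+1) : ℝ)))) * hcancel
  _ ≤ (∏ t ∈ Finset.range k, (((ℓ:ℝ) + 1 + t) * (a + ℓ + t))) *
        ((poch a n / poch (a + ℓ) n) * (poch (a + (n:ℕ)) ℓ / poch b ℓ)) := by
      have h2 := mul_le_mul_of_nonneg_left hR (le_of_lt (div_pos han haℓn))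
      apply mul_le_mul hQ h2 ?_ ?_
      · apply mul_nonneg (by positivity)
        linarith [hH]
      · exact Finset.prod_nonneg fun t _ => by positivity

lemma shiftSq_pos (a b : ℝ) (ha : 0 < a) (hb : 0 < b) (k ℓ : ℕ) :
    0 < shiftSq a b k ℓ := by
  unfold shiftSq
  apply mul_pos
  · exact Finset.prod_pos fun t _ => by positivity
  · exact div_pos (poch_pos ha ℓ) (poch_pos hb ℓ)

/-- Let `λ_j > λ_i > 0`, `i < j` and `k = j - i - 1 ≥ 0`.  The weight sequence
`((ℓ+k)!/ℓ!) √(a_{ℓ+k}(λ_i)/a_ℓ(λ_j))` of the shift `S` of multiplicity `k`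
is bounded if and only if `λ_j - λ_i ≥ 2(j-i) - 2`. -/
theorem stmt_3 (lami lamj : ℝ) (hi : 0 < lami) (hij : lami < lamj)
    (i j k : ℕ) (hij' : i < j) (hk : k = j - i - 1) :
    (∃ C : ℝ, ∀ ℓ : ℕ,
        (((ℓ + k).factorial : ℝ) / (ℓ.factorial : ℝ)) *
          Real.sqrt (bergmanCoeff lami (ℓ + k) / bergmanCoeff lamj ℓ) ≤ C)
      ↔ lamj - lami ≥ 2 * ((j : ℝ) - (i : ℝ)) - 2 := by
  have hj0 : 0 < lamj := lt_trans hi hij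
  have hk1 : j = i + (k + 1) := by omega
  have hcast : ((j:ℝ) - (i:ℝ)) = (k:ℝ) + 1 := by subst hk1; push_cast; ring
  rw [hcast]
  constructor
  · rintro ⟨C, hC⟩
    by_contra h
    push_neg at h
    have hb' : lamj < lami + ((k+k:ℕ):ℝ) := by push_cast; linarith
    set c0 : ℝ := (1/((lami+1)*(1+k/lami)))^k * poch lami (k+k) with hc0def
    have hc0 : 0 < c0 := mul_pos (pow_pos (by positivity) k) (poch_pos hi _)
    set ε' : ℝ := (lami + ((k+k:ℕ):ℝ) - lamj)/(lamj+1) with hε'def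
    have hε' : 0 < ε' := div_pos (by linarith) (by linarith)
    have hbound : ∀ ℓ : ℕ, c0 * (1 + ε' * ∑ m ∈ Finset.range ℓ, (1/(m+1) : ℝ)) ≤ C^2 := by
      intro ℓ
      have h1 := shiftSq_lower lami lamj hi hj0 k hb' ℓ
      have h2 := hC ℓ
      rw [weight_eq_sqrt lami lamj hi hj0 k ℓ] at h2
      have hpos := shiftSq_pos lami lamj hi hj0 k ℓ
      have h3 : shiftSq lami lamj k ℓ ≤ C^2 := by
        have := Real.sqrt_le_sqrt (le_of_lt hpos)
        nlinarith [Real.sq_sqrt hpos.le, Real.sqrt_nonneg (shiftSq lami lamj k ℓ)]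
      calc c0 * (1 + ε' * ∑ m ∈ Finset.range ℓ, (1/(m+1) : ℝ))
          ≤ shiftSq lami lamj k ℓ := h1
      _ ≤ C^2 := h3
    obtain ⟨ℓ, hℓ⟩ := (Real.tendsto_sum_range_one_div_nat_succ_atTop.eventually_gt_atTop
      (C^2 / (c0 * ε'))).exists
    have h4 := hbound ℓ
    have h5 : C^2 < (∑ m ∈ Finset.range ℓ, (1/(m+1) : ℝ)) * (c0 * ε') :=
      (div_lt_iff₀ (mul_pos hc0 hε')).1 hℓ
    nlinarith
  · intro h
    have hb' : lami + ((k+k:ℕ):ℝ) ≤ lamj := by push_cast; linarith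
    refine ⟨Real.sqrt ((1 + 1/lami)^k * poch lami (k+k)), fun ℓ => ?_⟩
    rw [weight_eq_sqrt lami lamj hi hj0 k ℓ]
    exact Real.sqrt_le_sqrt (shiftSq_bounded lami lamj hi k hb' ℓ)
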